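/- Let σ and τ be the integer matrices σ = [[1,−1],[1,0]] and τ = [[1,−1],[0,−1]], both of which lie in GL₂(ℤ). The subgroup of GL₂(ℤ) generated by {σ, τ} is isomorphic to the dihedral group of order 12. -/
import Mathlib

private def dmap (σ τ : GL (Fin 2) ℤ) : DihedralGroup 6 → GL (Fin 2) ℤ
  | .r i => σ ^ (i.val : ℤ)
  | .sr i => τ * σ ^ (i.val : ℤ)

/-- The subgroup of GL₂(ℤ) generated by σ = [[1,−1],[1,0]] and τ = [[1,−1],[0,−1]]
is isomorphic to the dihedral group of order 12. -/
theorem stmt_1 (σ τ : GL (Fin 2) ℤ)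
    (hσ : (σ : Matrix (Fin 2) (Fin 2) ℤ) = !![1, -1; 1, 0])
    (hτ : (τ : Matrix (Fin 2) (Fin 2) ℤ) = !![1, -1; 0, -1]) :
    Nonempty ((Subgroup.closure {σ, τ} : Subgroup (GL (Fin 2) ℤ)) ≃* DihedralGroup 6) := by
  -- basic relations
  have h6 : σ ^ (6 : ℕ) = 1 := by
    ext : 1
    simp only [Units.val_pow_eq_pow_val, hσ, Units.val_one]
    norm_num [pow_succ, Matrix.mul_fin_two]
    rw [Matrix.one_fin_two]
  have h2 : τ ^ (2 : ℕ) = 1 := by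
    ext : 1
    simp only [Units.val_pow_eq_pow_val, hτ, Units.val_one]
    norm_num [pow_succ, Matrix.mul_fin_two]
    rw [Matrix.one_fin_two]
  have h3 : σ * τ * σ = τ := by
    ext : 1
    simp only [Units.val_mul, hσ, hτ]
    norm_num [Matrix.mul_fin_two]
  have hτinv : τ⁻¹ = τ := by
    rw [← mul_eq_one_iff_inv_eq, ← pow_two, h2]
  have h4 : (τ * σ * τ) * σ = 1 := by
    rw [show (τ * σ * τ) * σ = τ * (σ * τ * σ) by group, h3, ← pow_two, h2]
  have hconj : τ * σ * τ⁻¹ = σ⁻¹ := by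
    rw [hτinv]
    exact eq_inv_of_mul_eq_one_left h4
  have hz6 : σ ^ (6 : ℤ) = 1 := by
    rw [show (6:ℤ) = ((6:ℕ):ℤ) by norm_num, zpow_natCast]; exact h6
  -- σ^a depends only on a mod 6
  have hz : ∀ a b : ℤ, ((a : ZMod 6) = (b : ZMod 6)) → σ ^ a = σ ^ b := by
    intro a b h
    have hd : ((6:ℕ) : ℤ) ∣ a - b := by
      rw [← ZMod.intCast_zmod_eq_zero_iff_dvd]
      push_cast
      rw [h]; ring
    obtain ⟨k, hk⟩ := hd
    have hab : a = b + 6 * k := by push_cast at hk; linarith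
    rw [hab, zpow_add, zpow_mul, hz6, one_zpow, mul_one]
  -- commutation: σ^a * τ = τ * σ^(-a)
  have hcz : ∀ a : ℤ, σ ^ a * τ = τ * σ ^ (-a) := by
    intro a
    have key : τ * σ ^ a * τ⁻¹ = σ ^ (-a) := by
      rw [← conj_zpow, hconj, inv_zpow, ← zpow_neg]
    rw [← key, show τ * (τ * σ ^ a * τ⁻¹) = (τ * τ) * σ ^ a * τ⁻¹ by group,
      ← pow_two, h2, one_mul, hτinv]
  have valcast : ∀ i : ZMod 6, ((i.val : ℤ) : ZMod 6) = i := by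
    intro i
    push_cast [ZMod.natCast_val, ZMod.cast_id]
    rfl
  let F : DihedralGroup 6 →* GL (Fin 2) ℤ :=
    { toFun := dmap σ τ
      map_one' := by
        show dmap σ τ (.r 0) = 1
        simp [dmap, ZMod.val_zero]
      map_mul' := by
        rintro (i | i) (j | j) <;> simp only [dmap, DihedralGroup.r_mul_r,
          DihedralGroup.r_mul_sr, DihedralGroup.sr_mul_r, DihedralGroup.sr_mul_sr]
        · rw [← zpow_add]
          exact hz _ _ (by push_cast [valcast]; ring)
        · rw [← mul_assoc, hcz, mul_assoc, ← zpow_add]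
          congr 1
          exact hz _ _ (by push_cast [valcast]; ring)
        · rw [mul_assoc, ← zpow_add]
          congr 1
          exact hz _ _ (by push_cast [valcast]; ring)
        · symm
          calc τ * σ ^ (i.val : ℤ) * (τ * σ ^ (j.val : ℤ))
              = τ * (σ ^ (i.val : ℤ) * τ) * σ ^ (j.val : ℤ) := by group
          _ = τ * τ * (σ ^ (-(i.val : ℤ)) * σ ^ (j.val : ℤ)) := by rw [hcz]; group
          _ = σ ^ (((j - i).val : ℤ)) := by
              rw [← pow_two, h2, one_mul, ← zpow_add]
              exact hz _ _ (by push_cast [valcast]; ring)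
    }
  -- determinants
  have hdetσ : Matrix.GeneralLinearGroup.det σ = 1 := by
    ext
    simp [hσ, Matrix.det_fin_two_of]
  have hdetτ : Matrix.GeneralLinearGroup.det τ = -1 := by
    ext
    simp [hτ, Matrix.det_fin_two_of]
  -- injectivity
  have hinj : Function.Injective F := by
    rw [injective_iff_map_eq_one]
    rintro (i | i) h
    · have h' : σ ^ (i.val : ℤ) = 1 := h
      rw [zpow_natCast] at h'
      have hlt : i.val < 6 := i.val_lt
      have hne : ∀ k : ℕ, 0 < k → k < 6 → σ ^ k ≠ 1 := by
        intro k hk0 hk6 hcon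
        have hmat := congrArg Units.val hcon
        rw [Units.val_pow_eq_pow_val, hσ, Units.val_one] at hmat
        interval_cases k <;>
          simp only [pow_succ, pow_zero, one_mul, Matrix.mul_fin_two] at hmat <;>
          norm_num at hmat <;>
          exact absurd hmat (by decide)
      have hv0 : i.val = 0 := by
        by_contra hne0
        exact hne i.val (Nat.pos_of_ne_zero hne0) hlt h'
      have hi0 : i = 0 := by
        have := congrArg (Nat.cast : ℕ → ZMod 6) hv0
        rwa [ZMod.natCast_val, ZMod.cast_id, Nat.cast_zero] at this
      rw [hi0]; rfl
    · exfalso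
      have h' : τ * σ ^ (i.val : ℤ) = 1 := h
      have hd := congrArg (Matrix.GeneralLinearGroup.det) h'
      rw [map_mul, map_zpow, map_one, hdetσ, hdetτ, one_zpow, mul_one] at hd
      exact absurd hd (by decide)
  -- range equals the closure
  have hFr1 : F (.r 1) = σ := by
    show σ ^ (((1 : ZMod 6).val : ℤ)) = σ
    rw [show ((1 : ZMod 6).val) = 1 by decide]
    norm_num
  have hFsr0 : F (.sr 0) = τ := by
    show τ * σ ^ (((0 : ZMod 6).val : ℤ)) = τ
    rw [show ((0 : ZMod 6).val) = 0 by decide]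
    norm_num
  have hrange : F.range = Subgroup.closure {σ, τ} := by
    apply le_antisymm
    · rintro x ⟨y, rfl⟩
      have hσmem : σ ∈ Subgroup.closure {σ, τ} :=
        Subgroup.subset_closure (by simp)
      have hτmem : τ ∈ Subgroup.closure {σ, τ} :=
        Subgroup.subset_closure (by simp)
      obtain (i | i) := y
      · exact Subgroup.zpow_mem _ hσmem _
      · exact Subgroup.mul_mem _ hτmem (Subgroup.zpow_mem _ hσmem _)
    · rw [Subgroup.closure_le]
      rintro x (rfl | rfl)
      · exact ⟨.r 1, hFr1⟩
      · exact ⟨.sr 0, hFsr0⟩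
  exact ⟨(MulEquiv.subgroupCongr hrange.symm).trans (MonoidHom.ofInjective hinj).symm⟩
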